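/- Let E be a trace-preserving super-operator on D×D complex matrices, P a projection, and σ₀ a density matrix. Then supp(E^k(σ₀)) ⊆ range(P) for all k ≥ 0 if and only if supp(Σ_{k=0}^{D−1} E^k(σ₀)) ⊆ range(P), i.e., the invariance property □P holds for the orbit of σ₀ under E if and only if the average of the first D iterates satisfies P. -/

import Mathlib

open Matrix ComplexOrder Module

/-- The super-operator with Kraus operators `(E_i)`: `ρ ↦ Σ_i E_i ρ E_iᴴ`. -/
noncomputable def superOp {D : ℕ} {I : Type} [Fintype I]
    (E : I → Matrix (Fin D) (Fin D) ℂ) (ρ : Matrix (Fin D) (Fin D) ℂ) :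
    Matrix (Fin D) (Fin D) ℂ :=
  ∑ i, E i * ρ * (E i)ᴴ

section Aux
variable {D : ℕ}

private lemma exists_factor {V W : Type*} [AddCommGroup V] [Module ℂ V] [AddCommGroup W]
    [Module ℂ W] (f g : V →ₗ[ℂ] W) (h : LinearMap.ker g ≤ LinearMap.ker f) :
    ∃ h' : W →ₗ[ℂ] W, f = h'.comp g := by
  obtain ⟨h', hh'⟩ := LinearMap.exists_extend
    ((Submodule.liftQ (LinearMap.ker g) f h).comp g.quotKerEquivRange.symm.toLinearMap)
  refine ⟨h', ?_⟩
  ext x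
  have hx := LinearMap.congr_fun hh' ⟨g x, LinearMap.mem_range_self g x⟩
  simp only [LinearMap.comp_apply, Submodule.subtype_apply, LinearEquiv.coe_coe] at hx ⊢
  rw [hx, LinearMap.quotKerEquivRange_symm_apply_image, Submodule.mkQ_apply,
    Submodule.liftQ_apply]

private lemma range_le_range {A M : Matrix (Fin D) (Fin D) ℂ} (hA : A.IsHermitian)
    (hM : M.IsHermitian) (h : LinearMap.ker M.mulVecLin ≤ LinearMap.ker A.mulVecLin) :
    LinearMap.range A.mulVecLin ≤ LinearMap.range M.mulVecLin := by
  obtain ⟨h', hh'⟩ := exists_factor A.mulVecLin M.mulVecLin h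
  have hAC : A = LinearMap.toMatrix' h' * M := by
    have h2 := congrArg LinearMap.toMatrix' hh'
    rw [← Matrix.toLin'_apply' A, ← Matrix.toLin'_apply' M, LinearMap.toMatrix'_toLin',
      LinearMap.toMatrix'_comp, LinearMap.toMatrix'_toLin'] at h2
    exact h2
  have hMC : A = M * (LinearMap.toMatrix' h')ᴴ := by
    conv_lhs => rw [← hA]
    rw [hAC, conjTranspose_mul, hM]
  rw [hMC, Matrix.mulVecLin_mul]
  exact LinearMap.range_comp_le_range _ _

private lemma range_add {A B : Matrix (Fin D) (Fin D) ℂ} (hA : A.PosSemidef) (hB : B.PosSemidef) :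
    LinearMap.range (A + B).mulVecLin
      = LinearMap.range A.mulVecLin ⊔ LinearMap.range B.mulVecLin := by
  have key : ∀ {A B : Matrix (Fin D) (Fin D) ℂ}, A.PosSemidef → B.PosSemidef →
      LinearMap.range A.mulVecLin ≤ LinearMap.range (A + B).mulVecLin := by
    intro A B hA hB
    refine range_le_range hA.1 (hA.add hB).1 ?_
    intro x hx
    simp only [LinearMap.mem_ker, mulVecLin_apply] at hx ⊢
    have h0 : star x ⬝ᵥ A *ᵥ x + star x ⬝ᵥ B *ᵥ x = 0 := by
      rw [← dotProduct_add, ← add_mulVec, hx, dotProduct_zero]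
    have h1 := (add_eq_zero_iff_of_nonneg (hA.dotProduct_mulVec_nonneg x) (hB.dotProduct_mulVec_nonneg x)).mp h0
    exact (hA.dotProduct_mulVec_zero_iff x).mp h1.1
  refine le_antisymm ?_ (sup_le (key hA hB) (by rw [add_comm]; exact key hB hA))
  rintro y ⟨x, rfl⟩
  simp only [mulVecLin_apply, add_mulVec]
  exact Submodule.add_mem_sup (LinearMap.mem_range_self _ x) (LinearMap.mem_range_self _ x)

private lemma psd_sum {α : Type*} (s : Finset α) (f : α → Matrix (Fin D) (Fin D) ℂ)
    (hf : ∀ a ∈ s, (f a).PosSemidef) : (∑ a ∈ s, f a).PosSemidef := by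
  classical
  induction s using Finset.induction_on with
  | empty => simpa using Matrix.PosSemidef.zero
  | @insert a s ha ih =>
    rw [Finset.sum_insert ha]
    exact (hf a (Finset.mem_insert_self a s)).add
      (ih fun b hb => hf b (Finset.mem_insert_of_mem hb))

private lemma range_sum {α : Type*} (s : Finset α) (f : α → Matrix (Fin D) (Fin D) ℂ)
    (hf : ∀ a ∈ s, (f a).PosSemidef) :
    LinearMap.range (∑ a ∈ s, f a).mulVecLin = ⨆ a ∈ s, LinearMap.range (f a).mulVecLin := by
  classical
  induction s using Finset.induction_on with
  | empty => simp [Matrix.mulVecLin_zero]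
  | @insert a s ha ih =>
    rw [Finset.sum_insert ha,
      range_add (hf a (Finset.mem_insert_self a s))
        (psd_sum s f fun b hb => hf b (Finset.mem_insert_of_mem hb)),
      ih fun b hb => hf b (Finset.mem_insert_of_mem hb)]
    rw [Finset.iSup_insert]

private lemma range_mul_conjTranspose (N : Matrix (Fin D) (Fin D) ℂ) :
    LinearMap.range (N * Nᴴ).mulVecLin = LinearMap.range N.mulVecLin := by
  have hle : LinearMap.range (N * Nᴴ).mulVecLin ≤ LinearMap.range N.mulVecLin := by
    rw [Matrix.mulVecLin_mul]; exact LinearMap.range_comp_le_range _ _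
  have hr := Matrix.rank_self_mul_conjTranspose N
  rw [Matrix.rank, Matrix.rank] at hr
  exact Submodule.eq_of_le_of_finrank_le hle hr.ge

open scoped MatrixOrder in
private lemma range_psd_conj (N : Matrix (Fin D) (Fin D) ℂ) {ρ : Matrix (Fin D) (Fin D) ℂ}
    (hρ : ρ.PosSemidef) :
    LinearMap.range (N * ρ * Nᴴ).mulVecLin
      = (LinearMap.range ρ.mulVecLin).map N.mulVecLin := by
  obtain ⟨S, hSH, hSρ⟩ : ∃ S : Matrix (Fin D) (Fin D) ℂ, Sᴴ = S ∧ S * S = ρ :=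
    by
      obtain ⟨X, hX, -, h⟩ := CFC.exists_sqrt_of_isSelfAdjoint_of_quasispectrumRestricts
        hρ.isHermitian (QuasispectrumRestricts.nnreal_of_nonneg hρ.nonneg)
      exact ⟨X, hX.star_eq, h⟩
  subst hSρ
  have h1 : N * (S * S) * Nᴴ = (N * S) * (N * S)ᴴ := by
    rw [conjTranspose_mul, hSH]
    simp only [Matrix.mul_assoc]
  have h2 : S * S = S * Sᴴ := by rw [hSH]
  rw [h1, range_mul_conjTranspose, Matrix.mulVecLin_mul, LinearMap.range_comp,
    h2, range_mul_conjTranspose S]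

private lemma range_superOp {I : Type} [Fintype I] (E : I → Matrix (Fin D) (Fin D) ℂ)
    {ρ : Matrix (Fin D) (Fin D) ℂ} (hρ : ρ.PosSemidef) :
    LinearMap.range (superOp E ρ).mulVecLin
      = ⨆ i, (LinearMap.range ρ.mulVecLin).map (E i).mulVecLin := by
  rw [superOp, range_sum _ _ (fun i _ => hρ.mul_mul_conjTranspose_same (E i))]
  simp only [range_psd_conj _ hρ]
  simp

end Aux

/-- For a trace-preserving super-operator `E` on `D×D` matrices, a projection `P`
and a density matrix `σ₀`: `supp(E^k(σ₀)) ⊆ range P` for all `k ≥ 0` iff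
`supp(Σ_{k=0}^{D−1} E^k(σ₀)) ⊆ range P`. -/
theorem invariance_iff_sum_first_D_iterates {D : ℕ} {I : Type} [Fintype I]
    (E : I → Matrix (Fin D) (Fin D) ℂ)
    (htp : ∑ i, (E i)ᴴ * E i = (1 : Matrix (Fin D) (Fin D) ℂ))
    (P : Matrix (Fin D) (Fin D) ℂ) (hP1 : P.IsHermitian) (hP2 : P * P = P)
    (σ₀ : Matrix (Fin D) (Fin D) ℂ) (hσ₀ : σ₀.PosSemidef) (htr : σ₀.trace = 1) :
    (∀ k : ℕ, LinearMap.range ((superOp E)^[k] σ₀).mulVecLin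
        ≤ LinearMap.range P.mulVecLin) ↔
      LinearMap.range (∑ k ∈ Finset.range D, (superOp E)^[k] σ₀).mulVecLin
        ≤ LinearMap.range P.mulVecLin := by
  classical
  set V : ℕ → Submodule ℂ (Fin D → ℂ) :=
    fun k => LinearMap.range ((superOp E)^[k] σ₀).mulVecLin with hV
  have hpsd : ∀ k, ((superOp E)^[k] σ₀).PosSemidef := by
    intro k
    induction k with
    | zero => simpa using hσ₀
    | succ k ih =>
      rw [Function.iterate_succ_apply']
      exact psd_sum _ _ (fun i _ => ih.mul_mul_conjTranspose_same (E i))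
  set F : Submodule ℂ (Fin D → ℂ) → Submodule ℂ (Fin D → ℂ) :=
    fun S => ⨆ i, S.map (E i).mulVecLin with hF
  have hFmono : Monotone F := fun S T h => iSup_mono fun i => Submodule.map_mono h
  have hVsucc : ∀ k, V (k + 1) = F (V k) := by
    intro k
    show LinearMap.range ((superOp E)^[k+1] σ₀).mulVecLin = _
    rw [Function.iterate_succ_apply']
    exact range_superOp E (hpsd k)
  set W : ℕ → Submodule ℂ (Fin D → ℂ) := fun n => ⨆ k ∈ Finset.range n, V k with hW
  have hWsum : ∀ n,
      LinearMap.range (∑ k ∈ Finset.range n, (superOp E)^[k] σ₀).mulVecLin = W n :=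
    fun n => range_sum _ _ (fun k _ => hpsd k)
  have hVW : ∀ k n, k < n → V k ≤ W n := fun k n hk =>
    le_iSup₂ (f := fun k (_ : k ∈ Finset.range n) => V k) k (Finset.mem_range.mpr hk)
  have hWmono : Monotone W := by
    intro m n hmn
    exact iSup₂_le fun k hk => hVW k n (lt_of_lt_of_le (Finset.mem_range.mp hk) hmn)
  have hFW : ∀ n, F (W n) ≤ W (n + 1) := by
    intro n
    refine iSup_le fun i => ?_
    show (⨆ k ∈ Finset.range n, V k).map (E i).mulVecLin ≤ W (n + 1)
    simp only [Submodule.map_iSup]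
    refine iSup₂_le fun k hk => ?_
    calc (V k).map (E i).mulVecLin ≤ F (V k) := le_iSup (fun i => (V k).map (E i).mulVecLin) i
      _ = V (k + 1) := (hVsucc k).symm
      _ ≤ W (n + 1) := hVW _ _ (Nat.succ_lt_succ (Finset.mem_range.mp hk))
  -- key claim: every V k is contained in W D
  have hkey : ∀ k, V k ≤ W D := by
    by_cases hs : ∃ m < D, W m = W (m + 1)
    · obtain ⟨m, hmD, hm⟩ := hs
      have hVm : ∀ k, V k ≤ W m := by
        intro k
        induction k with
        | zero => exact (hVW 0 (m + 1) (Nat.succ_pos m)).trans hm.ge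
        | succ k ih =>
          rw [hVsucc k]
          exact (hFmono ih).trans ((hFW m).trans hm.ge)
      exact fun k => (hVm k).trans (hWmono hmD.le)
    · push_neg at hs
      have hdim : ∀ n, n ≤ D → n ≤ finrank ℂ (W n) := by
        intro n hn
        induction n with
        | zero => exact Nat.zero_le _
        | succ n ih =>
          have h1 : W n < W (n + 1) :=
            lt_of_le_of_ne (hWmono (Nat.le_succ n)) (hs n (Nat.lt_of_succ_le hn))
          have h2 := Submodule.finrank_lt_finrank_of_lt h1
          have h3 := ih (Nat.le_of_succ_le hn)
          omega
      have hD : D ≤ finrank ℂ (W D) := hdim D le_rfl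
      have htop : W D = ⊤ := by
        apply Submodule.eq_top_of_finrank_eq
        have hle : finrank ℂ (W D) ≤ D := by
          simpa [Module.finrank_fin_fun] using Submodule.finrank_le (W D)
        rw [Module.finrank_fin_fun]
        omega
      intro k
      rw [htop]
      exact le_top
  constructor
  · intro h
    rw [hWsum]
    exact iSup₂_le fun k _ => h k
  · intro h k
    rw [hWsum] at h
    exact (hkey k).trans h
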